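/- There exists a function g : {0,1}^3 → ℝ whose Shapley values satisfy φ_1 > φ_2 > φ_3, yet the insertion AUC of the ordering (1,3,2) strictly exceeds that of (1,2,3). In particular, g with anchored interactions Δ_1 = 3, Δ_2 = 2, Δ_3 = 1, Δ_{1,2} = A for any A with −2 < A < −1, and all other Δ_u = 0, is such a function. -/
import Mathlib

open Finset

noncomputable def shapley {n : ℕ} (g : Finset (Fin n) → ℝ) (j : Fin n) : ℝ :=
  ∑ S ∈ ((univ : Finset (Fin n)).erase j).powerset,
    ((S.card.factorial * (n - S.card - 1).factorial : ℕ) : ℝ) / (n.factorial : ℝ)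
      * (g (insert j S) - g S)

noncomputable def gA (A : ℝ) (w : Finset (Fin 3)) : ℝ :=
  3 * (if (0 : Fin 3) ∈ w then (1 : ℝ) else 0)
    + 2 * (if (1 : Fin 3) ∈ w then (1 : ℝ) else 0)
    + (if (2 : Fin 3) ∈ w then (1 : ℝ) else 0)
    + (if (0 : Fin 3) ∈ w ∧ (1 : Fin 3) ∈ w then A else 0)


lemma shapA0 (A : ℝ) : shapley (gA A) 0 = 3 + A / 2 := by
  unfold shapley
  rw [show ((univ:Finset (Fin 3)).erase 0) = {1,2} from by decide]
  rw [show ({1,2}:Finset (Fin 3)).powerset = {∅,{1},{2},{1,2}} from by decide]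
  rw [sum_insert (by decide), sum_insert (by decide), sum_insert (by decide), sum_singleton]
  rw [show #(∅:Finset (Fin 3)) = 0 from by decide, show #({1}:Finset (Fin 3)) = 1 from by decide,
    show #({2}:Finset (Fin 3)) = 1 from by decide, show #({1,2}:Finset (Fin 3)) = 2 from by decide]
  norm_num [gA, Nat.factorial, Finset.mem_insert, Fin.ext_iff]
  ring

lemma shapA1 (A : ℝ) : shapley (gA A) 1 = 2 + A / 2 := by
  unfold shapley
  rw [show ((univ:Finset (Fin 3)).erase 1) = {0,2} from by decide]
  rw [show ({0,2}:Finset (Fin 3)).powerset = {∅,{0},{2},{0,2}} from by decide]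
  rw [sum_insert (by decide), sum_insert (by decide), sum_insert (by decide), sum_singleton]
  rw [show #(∅:Finset (Fin 3)) = 0 from by decide, show #({0}:Finset (Fin 3)) = 1 from by decide,
    show #({2}:Finset (Fin 3)) = 1 from by decide, show #({0,2}:Finset (Fin 3)) = 2 from by decide]
  norm_num [gA, Nat.factorial, Finset.mem_insert, Fin.ext_iff]
  ring

lemma shapA2 (A : ℝ) : shapley (gA A) 2 = 1 := by
  unfold shapley
  rw [show ((univ:Finset (Fin 3)).erase 2) = {0,1} from by decide]
  rw [show ({0,1}:Finset (Fin 3)).powerset = {∅,{0},{1},{0,1}} from by decide]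
  rw [sum_insert (by decide), sum_insert (by decide), sum_insert (by decide), sum_singleton]
  rw [show #(∅:Finset (Fin 3)) = 0 from by decide, show #({0}:Finset (Fin 3)) = 1 from by decide,
    show #({1}:Finset (Fin 3)) = 1 from by decide, show #({0,1}:Finset (Fin 3)) = 2 from by decide]
  norm_num [gA, Nat.factorial, Finset.mem_insert, Fin.ext_iff]

/-- There is a function `g : {0,1}^3 → ℝ` with Shapley values
`φ₁ > φ₂ > φ₃` for which the insertion AUC of the ordering `(1,3,2)`
strictly exceeds that of `(1,2,3)`; in particular `gA A` is such a
function whenever `−2 < A < −1`. -/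
theorem shapley_order_not_optimal_for_auc :
    (∃ g : Finset (Fin 3) → ℝ,
        (shapley g 0 > shapley g 1 ∧ shapley g 1 > shapley g 2) ∧
        g ∅ + g {0} + g {0, 2} + g univ > g ∅ + g {0} + g {0, 1} + g univ)
    ∧ ∀ A : ℝ, -2 < A → A < -1 →
        (shapley (gA A) 0 > shapley (gA A) 1
          ∧ shapley (gA A) 1 > shapley (gA A) 2) ∧
        gA A ∅ + gA A {0} + gA A {0, 2} + gA A univ
          > gA A ∅ + gA A {0} + gA A {0, 1} + gA A univ := by
  have key : ∀ A : ℝ, -2 < A → A < -1 →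
      (shapley (gA A) 0 > shapley (gA A) 1
        ∧ shapley (gA A) 1 > shapley (gA A) 2) ∧
      gA A ∅ + gA A {0} + gA A {0, 2} + gA A univ
        > gA A ∅ + gA A {0} + gA A {0, 1} + gA A univ := by
    intro A h1 h2
    rw [shapA0, shapA1, shapA2]
    have hmem : (2 : Fin 3) ∈ (univ : Finset (Fin 3)) := mem_univ _
    constructor
    · constructor <;> linarith
    · have : gA A {0, 2} = 4 := by norm_num [gA, Finset.mem_insert, Fin.ext_iff]
      have h2' : gA A {0, 1} = 5 + A := by
        norm_num [gA, Finset.mem_insert, Fin.ext_iff]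
      rw [this, h2']
      linarith
  exact ⟨⟨gA (-3/2), key (-3/2) (by norm_num) (by norm_num)⟩, key⟩
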